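/- Let n ≥ 3 and let G be a group with A_n ≤ G ≤ S_n acting naturally on a set Ω of size n. If G = AB for subgroups A, B of G, then at least one of A or B acts transitively on Ω. -/

import Mathlib

open scoped Pointwise

lemma exists_perm_iff_mem {α : Type*} [Fintype α] [DecidableEq α] {s t : Finset α}
    (h : s.card = t.card) : ∃ σ : Equiv.Perm α, ∀ x, x ∈ s ↔ σ x ∈ t := by
  classical
  have hc : Fintype.card (↑(s : Set α)) = Fintype.card (↑(t : Set α)) := by
    simpa using h
  have hcc : Fintype.card (↑((s : Set α)ᶜ)) = Fintype.card (↑((t : Set α)ᶜ)) := by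
    simp only [Fintype.card_compl_set, hc]
  let e1 := Fintype.equivOfCardEq hc
  let e2 := Fintype.equivOfCardEq hcc
  refine ⟨(Equiv.Set.sumCompl (s : Set α)).symm.trans ((e1.sumCongr e2).trans
    (Equiv.Set.sumCompl (t : Set α))), fun x => ?_⟩
  simp only [Equiv.trans_apply, Equiv.sumCongr_apply]
  constructor
  · intro hx
    rw [Equiv.Set.sumCompl_symm_apply_of_mem (s := (s:Set α)) (Finset.mem_coe.2 hx)]
    simp only [Sum.map_inl, Equiv.Set.sumCompl_apply_inl]
    exact Finset.mem_coe.1 (e1 ⟨x, hx⟩).2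
  · intro hx
    by_contra hxs
    rw [Equiv.Set.sumCompl_symm_apply_of_notMem (s := (s:Set α)) (by simpa using hxs)] at hx
    simp only [Sum.map_inr, Equiv.Set.sumCompl_apply_inr] at hx
    exact (e2 ⟨x, by simpa using hxs⟩).2 (by simpa using hx)

lemma exists_perm_image_eq {α : Type*} [Fintype α] [DecidableEq α] {s t : Finset α}
    (h : s.card = t.card) : ∃ σ : Equiv.Perm α, Finset.image σ s = t := by
  obtain ⟨σ, hσ⟩ := exists_perm_iff_mem h
  refine ⟨σ, Finset.eq_of_subset_of_card_le ?_ ?_⟩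
  · intro y hy
    obtain ⟨x, hx, rfl⟩ := Finset.mem_image.1 hy
    exact (hσ x).1 hx
  · rw [Finset.card_image_of_injective _ σ.injective, h]

lemma exists_finset_inter_card {α : Type*} [Fintype α] [DecidableEq α] (Γ : Finset α)
    (k c : ℕ) (hck : c ≤ k) (hc : c ≤ Γ.card) (h2 : k - c ≤ Γᶜ.card) :
    ∃ S : Finset α, S.card = k ∧ (S ∩ Γ).card = c := by
  obtain ⟨Γ1, hΓ1, hΓ1c⟩ := Finset.exists_subset_card_eq (s := Γ) hc
  obtain ⟨Γ2, hΓ2, hΓ2c⟩ := Finset.exists_subset_card_eq (s := Γᶜ) h2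
  have hdisj : Disjoint Γ1 Γ2 := by
    refine Finset.disjoint_left.2 fun x h1 h2x => ?_
    exact Finset.mem_compl.1 (hΓ2 h2x) (hΓ1 h1)
  refine ⟨Γ1 ∪ Γ2, ?_, ?_⟩
  · rw [Finset.card_union_of_disjoint hdisj, hΓ1c, hΓ2c]
    omega
  · have : (Γ1 ∪ Γ2) ∩ Γ = Γ1 := by
      rw [Finset.union_inter_distrib_right]
      rw [Finset.inter_eq_left.2 hΓ1]
      have : Γ2 ∩ Γ = ∅ := by
        refine Finset.eq_empty_of_forall_notMem fun x hx => ?_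
        obtain ⟨h2x, hGx⟩ := Finset.mem_inter.1 hx
        exact Finset.mem_compl.1 (hΓ2 h2x) hGx
      rw [this, Finset.union_empty]
    rw [this, hΓ1c]

theorem factor_transitive_of_alternating_le (n : ℕ) (hn : 3 ≤ n)
    (G A B : Subgroup (Equiv.Perm (Fin n)))
    (hG : alternatingGroup (Fin n) ≤ G) (hA : A ≤ G) (hB : B ≤ G)
    (hfact : (A : Set (Equiv.Perm (Fin n))) * (B : Set (Equiv.Perm (Fin n))) =
      (G : Set (Equiv.Perm (Fin n)))) :
    (∀ i j : Fin n, ∃ σ ∈ A, σ i = j) ∨ (∀ i j : Fin n, ∃ σ ∈ B, σ i = j) := by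
  classical
  by_contra hcon
  push_neg at hcon
  obtain ⟨⟨i₀, j₀, h₀⟩, ⟨i₁, j₁, h₁⟩⟩ := hcon
  -- orbits
  set Δ : Finset (Fin n) := Finset.univ.filter (fun j => ∃ σ ∈ A, σ i₀ = j) with hΔdef
  set Γ : Finset (Fin n) := Finset.univ.filter (fun j => ∃ σ ∈ B, σ i₁ = j) with hΓdef
  have hiΔ : i₀ ∈ Δ := Finset.mem_filter.2 ⟨Finset.mem_univ _, 1, A.one_mem, rfl⟩
  have hiΓ : i₁ ∈ Γ := Finset.mem_filter.2 ⟨Finset.mem_univ _, 1, B.one_mem, rfl⟩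
  have hjΔ : j₀ ∉ Δ := fun h => by
    obtain ⟨-, σ, hσ, hσ'⟩ := Finset.mem_filter.1 h
    exact h₀ σ hσ hσ'
  have hjΓ : j₁ ∉ Γ := fun h => by
    obtain ⟨-, σ, hσ, hσ'⟩ := Finset.mem_filter.1 h
    exact h₁ σ hσ hσ'
  -- invariance of orbits
  have hΔA : ∀ a : Equiv.Perm (Fin n), a ∈ A → Finset.image a Δ = Δ := by
    intro a ha
    refine Finset.eq_of_subset_of_card_le ?_ (le_of_eq (Finset.card_image_of_injective _ a.injective).symm)
    intro y hy
    obtain ⟨x, hx, rfl⟩ := Finset.mem_image.1 hy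
    obtain ⟨-, σ, hσ, rfl⟩ := Finset.mem_filter.1 hx
    exact Finset.mem_filter.2 ⟨Finset.mem_univ _, a * σ, A.mul_mem ha hσ, rfl⟩
  have hΓB : ∀ b : Equiv.Perm (Fin n), b ∈ B → Finset.image b Γ = Γ := by
    intro b hb
    refine Finset.eq_of_subset_of_card_le ?_ (le_of_eq (Finset.card_image_of_injective _ b.injective).symm)
    intro y hy
    obtain ⟨x, hx, rfl⟩ := Finset.mem_image.1 hy
    obtain ⟨-, σ, hσ, rfl⟩ := Finset.mem_filter.1 hx
    exact Finset.mem_filter.2 ⟨Finset.mem_univ _, b * σ, B.mul_mem hb hσ, rfl⟩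
  -- cardinalities
  have hkn : Δ.card < n := by
    have : Δ ⊂ Finset.univ := Finset.ssubset_univ_iff.2 (fun h => hjΔ (h ▸ Finset.mem_univ j₀))
    simpa using Finset.card_lt_card this
  have hln : Γ.card < n := by
    have : Γ ⊂ Finset.univ := Finset.ssubset_univ_iff.2 (fun h => hjΓ (h ▸ Finset.mem_univ j₁))
    simpa using Finset.card_lt_card this
  have hk1 : 1 ≤ Δ.card := Finset.card_pos.2 ⟨i₀, hiΔ⟩
  have hl1 : 1 ≤ Γ.card := Finset.card_pos.2 ⟨i₁, hiΓ⟩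
  have hΓc : Γᶜ.card = n - Γ.card := by
    rw [Finset.card_compl]; simp
  -- key: intersection card invariant under G
  have key : ∀ g : Equiv.Perm (Fin n), g ∈ G →
      ((Finset.image g Δ) ∩ Γ).card = (Δ ∩ Γ).card := by
    intro g hg
    have hginv : g⁻¹ ∈ (A : Set (Equiv.Perm (Fin n))) * (B : Set (Equiv.Perm (Fin n))) := by
      rw [hfact]; exact G.inv_mem hg
    obtain ⟨a, ha, b, hb, hab⟩ := Set.mem_mul.1 hginv
    have hgeq : g = b⁻¹ * a⁻¹ := by
      have : g⁻¹ = a * b := hab.symm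
      rw [← mul_inv_rev, ← this, inv_inv]
    have himg : Finset.image ⇑g Δ = Finset.image (⇑(b⁻¹ : Equiv.Perm (Fin n))) Δ := by
      rw [hgeq]
      have h3 : Finset.image (⇑(a⁻¹ : Equiv.Perm (Fin n))) Δ = Δ := hΔA a⁻¹ (A.inv_mem ha)
      have h4 : Finset.image (⇑(b⁻¹ * a⁻¹)) Δ
          = Finset.image (⇑(b⁻¹ : Equiv.Perm (Fin n))) (Finset.image (⇑(a⁻¹ : Equiv.Perm (Fin n))) Δ) := by
        rw [Finset.image_image]; rfl
      rw [h4, h3]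
    rw [himg]
    have hbinv : Finset.image ⇑b⁻¹ Γ = Γ := hΓB b⁻¹ (B.inv_mem hb)
    calc (Finset.image ⇑b⁻¹ Δ ∩ Γ).card
        = (Finset.image ⇑b⁻¹ Δ ∩ Finset.image ⇑b⁻¹ Γ).card := by rw [hbinv]
      _ = (Finset.image ⇑b⁻¹ (Δ ∩ Γ)).card := by
          rw [Finset.image_inter _ _ (b⁻¹ : Equiv.Perm (Fin n)).injective]
      _ = (Δ ∩ Γ).card := Finset.card_image_of_injective _ (b⁻¹ : Equiv.Perm (Fin n)).injective
  -- a transposition preserving Γ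
  have hswap : ∃ s : Equiv.Perm (Fin n), Equiv.Perm.sign s = -1 ∧ Finset.image s Γ = Γ := by
    have hcard : 2 ≤ Γ.card ∨ 2 ≤ Γᶜ.card := by
      rw [hΓc]; omega
    obtain h | h := hcard
    · obtain ⟨p, q, hp, hq, hpq⟩ := Finset.one_lt_card_iff.1 h
      refine ⟨Equiv.swap p q, Equiv.Perm.sign_swap hpq, ?_⟩
      refine Finset.eq_of_subset_of_card_le ?_
        (le_of_eq (Finset.card_image_of_injective _ (Equiv.swap p q).injective).symm)
      intro y hy
      obtain ⟨x, hx, rfl⟩ := Finset.mem_image.1 hy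
      rcases eq_or_ne x p with rfl | hxp
      · rwa [Equiv.swap_apply_left]
      rcases eq_or_ne x q with rfl | hxq
      · rwa [Equiv.swap_apply_right]
      · rwa [Equiv.swap_apply_of_ne_of_ne hxp hxq]
    · obtain ⟨p, q, hp, hq, hpq⟩ := Finset.one_lt_card_iff.1 h
      refine ⟨Equiv.swap p q, Equiv.Perm.sign_swap hpq, ?_⟩
      refine Finset.eq_of_subset_of_card_le ?_
        (le_of_eq (Finset.card_image_of_injective _ (Equiv.swap p q).injective).symm)
      intro y hy
      obtain ⟨x, hx, rfl⟩ := Finset.mem_image.1 hy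
      have hxp : x ≠ p := fun h' => Finset.mem_compl.1 hp (h' ▸ hx)
      have hxq : x ≠ q := fun h' => Finset.mem_compl.1 hq (h' ▸ hx)
      rwa [Equiv.swap_apply_of_ne_of_ne hxp hxq]
  obtain ⟨s, hs_sign, hs_img⟩ := hswap
  -- key for all permutations
  have key2 : ∀ g : Equiv.Perm (Fin n),
      ((Finset.image g Δ) ∩ Γ).card = (Δ ∩ Γ).card := by
    intro g
    rcases Int.units_eq_one_or (Equiv.Perm.sign g) with hsg | hsg
    · exact key g (hG (Equiv.Perm.mem_alternatingGroup.2 hsg))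
    · have hmem : s * g ∈ alternatingGroup (Fin n) := by
        rw [Equiv.Perm.mem_alternatingGroup, Equiv.Perm.sign_mul, hs_sign, hsg]
        decide
      have h1 := key (s * g) (hG hmem)
      have h2 : Finset.image ⇑(s * g) Δ = Finset.image ⇑s (Finset.image ⇑g Δ) := by
        rw [Finset.image_image]; rfl
      rw [h2] at h1
      calc ((Finset.image ⇑g Δ) ∩ Γ).card
          = (Finset.image ⇑s ((Finset.image ⇑g Δ) ∩ Γ)).card :=
            (Finset.card_image_of_injective _ s.injective).symm
        _ = (Finset.image ⇑s (Finset.image ⇑g Δ) ∩ Finset.image ⇑s Γ).card := by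
            rw [Finset.image_inter _ _ s.injective]
        _ = (Finset.image ⇑s (Finset.image ⇑g Δ) ∩ Γ).card := by rw [hs_img]
        _ = (Δ ∩ Γ).card := h1
  -- every finset of the same card as Δ has the same intersection card with Γ
  have key3 : ∀ S : Finset (Fin n), S.card = Δ.card → (S ∩ Γ).card = (Δ ∩ Γ).card := by
    intro S hS
    obtain ⟨σ, hσ⟩ := exists_perm_image_eq hS.symm
    rw [← hσ]
    exact key2 σ
  -- two finsets of card Δ.card with distinct intersection cards
  set k := Δ.card
  set l := Γ.card
  have hkn' : k ≤ n := le_of_lt hkn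
  obtain ⟨S1, hS1c, hS1i⟩ := exists_finset_inter_card Γ k (k - min k (n - l))
    (by omega) (by rw [hΓc] at *; omega) (by rw [hΓc]; omega)
  obtain ⟨S2, hS2c, hS2i⟩ := exists_finset_inter_card Γ k (min k l)
    (by omega) (by omega) (by rw [hΓc]; omega)
  have e1 := key3 S1 hS1c
  have e2 := key3 S2 hS2c
  rw [hS1i] at e1
  rw [hS2i] at e2
  omega
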